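/- For a tree T with edge (x,y), the 1-Wasserstein distance between the uniform measure on the neighbors of x excluding y (p points) and the uniform measure on the neighbors of y excluding x (q points) equals (1/p)·Σᵢ d_T(xᵢ,x) + d_T(x,y) + (1/q)·Σⱼ d_T(y,yⱼ). -/

import Mathlib

/-- Total weight of a walk: the sum of `w u v` over the consecutive edges of the walk. -/
def walkWeight {V : Type*} {G : SimpleGraph V} (w : V → V → ℝ) :
    {u v : V} → G.Walk u v → ℝ
  | _, _, SimpleGraph.Walk.nil => 0
  | u, _, SimpleGraph.Walk.cons (v := b) _ q => w u b + walkWeight w q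

/-- Weighted geodesic distance: infimum of walk weights over all walks from `u` to `v`. -/
noncomputable def wdist {V : Type*} (G : SimpleGraph V) (w : V → V → ℝ) (u v : V) : ℝ :=
  sInf {c : ℝ | ∃ q : G.Walk u v, walkWeight w q = c}

section Helpers

open SimpleGraph

variable {V : Type*} [DecidableEq V] {G : SimpleGraph V} {w : V → V → ℝ}

lemma walkWeight_nonneg (hw : ∀ u v, G.Adj u v → 0 < w u v) :
    ∀ {u v : V} (q : G.Walk u v), 0 ≤ walkWeight w q
  | _, _, SimpleGraph.Walk.nil => le_refl 0
  | _, _, SimpleGraph.Walk.cons h q =>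
      add_nonneg (hw _ _ h).le (walkWeight_nonneg hw q)

lemma walkWeight_append : ∀ {u v x : V} (p : G.Walk u v) (q : G.Walk v x),
    walkWeight w (p.append q) = walkWeight w p + walkWeight w q
  | _, _, _, SimpleGraph.Walk.nil, q => by simp [walkWeight]
  | _, _, _, SimpleGraph.Walk.cons h p, q => by
      simp [walkWeight, walkWeight_append p q]; ring

lemma walkWeight_bypass_le (hw : ∀ u v, G.Adj u v → 0 < w u v) :
    ∀ {u v : V} (q : G.Walk u v), walkWeight w q.bypass ≤ walkWeight w q
  | _, _, SimpleGraph.Walk.nil => le_refl _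
  | u, v, SimpleGraph.Walk.cons h q => by
      rw [SimpleGraph.Walk.bypass]
      split_ifs with hs
      · calc walkWeight w (q.bypass.dropUntil u hs)
            ≤ walkWeight w q.bypass := by
              have := walkWeight_append (w := w) (q.bypass.takeUntil u hs) (q.bypass.dropUntil u hs)
              rw [SimpleGraph.Walk.take_spec] at this
              have h0 := walkWeight_nonneg hw (q.bypass.takeUntil u hs)
              linarith
          _ ≤ walkWeight w q := walkWeight_bypass_le hw q
          _ ≤ walkWeight w (SimpleGraph.Walk.cons h q) := by
              simp [walkWeight]; exact (hw _ _ h).le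
      · simp only [walkWeight]
        exact add_le_add (le_refl _) (walkWeight_bypass_le hw q)

lemma wdist_eq_path (hT : G.IsTree) (hw : ∀ u v, G.Adj u v → 0 < w u v)
    {u v : V} (P : G.Walk u v) (hP : P.IsPath) :
    wdist G w u v = walkWeight w P := by
  have key : ∀ q : G.Walk u v, walkWeight w P ≤ walkWeight w q := by
    intro q
    have : (⟨P, hP⟩ : G.Path u v) = ⟨q.bypass, q.bypass_isPath⟩ :=
      hT.IsAcyclic.path_unique _ _
    have hPQ : P = q.bypass := congrArg Subtype.val this
    rw [hPQ]
    exact walkWeight_bypass_le hw q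
  refine le_antisymm (csInf_le ⟨walkWeight w P, ?_⟩ ⟨P, rfl⟩) ?_
  · rintro c ⟨q, rfl⟩; exact key q
  · exact le_csInf ⟨_, P, rfl⟩ (by rintro c ⟨q, rfl⟩; exact key q)


end Helpers

/-- For a tree `T` with edge `(x,y)`, the 1-Wasserstein distance between the
uniform measure on the `p` neighbors of `x` (excluding `y`) and the uniform measure on the
`q` neighbors of `y` (excluding `x`) equals
`(1/p)·Σᵢ d_T(xᵢ,x) + d_T(x,y) + (1/q)·Σⱼ d_T(y,yⱼ)`. -/
theorem tree_wasserstein {V : Type*} (T : SimpleGraph V) (hT : T.IsTree)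
    (w : V → V → ℝ) (hw : ∀ u v, T.Adj u v → 0 < w u v) (hsymm : ∀ u v, w u v = w v u)
    (x y : V) (hxy : T.Adj x y)
    (p q : ℕ) (hp : 0 < p) (hq : 0 < q)
    (xs : Fin p → V) (ys : Fin q → V)
    (hxs : Function.Injective xs) (hys : Function.Injective ys)
    (hxsadj : ∀ i, T.Adj x (xs i)) (hxsne : ∀ i, xs i ≠ y)
    (hysadj : ∀ j, T.Adj y (ys j)) (hysne : ∀ j, ys j ≠ x) :
    IsLeast {c : ℝ | ∃ γ : Fin p → Fin q → ℝ,
        (∀ i j, 0 ≤ γ i j) ∧ (∀ i, ∑ j, γ i j = 1 / p) ∧ (∀ j, ∑ i, γ i j = 1 / q) ∧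
        ∑ i, ∑ j, wdist T w (xs i) (ys j) * γ i j = c}
      ((1 / p) * ∑ i, wdist T w (xs i) x + wdist T w x y
        + (1 / q) * ∑ j, wdist T w y (ys j)) := by
  classical
  have hpR : (p : ℝ) ≠ 0 := Nat.cast_ne_zero.mpr hp.ne'
  have hqR : (q : ℝ) ≠ 0 := Nat.cast_ne_zero.mpr hq.ne'
  -- no triangles
  have htri : ∀ z, T.Adj x z → T.Adj y z → False := by
    intro z hxz hyz
    have hzx : z ≠ x := hxz.ne'
    have hzy : z ≠ y := hyz.ne'
    have hP1 : (SimpleGraph.Walk.cons hxy SimpleGraph.Walk.nil : T.Walk x y).IsPath := by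
      simp [SimpleGraph.Walk.isPath_def, hxy.ne]
    have hP2 : (SimpleGraph.Walk.cons hxz (SimpleGraph.Walk.cons hyz.symm
        SimpleGraph.Walk.nil) : T.Walk x y).IsPath := by
      simp [SimpleGraph.Walk.isPath_def, hzx.symm, hzy, hxy.ne]
    have := hT.IsAcyclic.path_unique ⟨_, hP1⟩ ⟨_, hP2⟩
    have h' : (SimpleGraph.Walk.cons hxy SimpleGraph.Walk.nil : T.Walk x y) =
        SimpleGraph.Walk.cons hxz (SimpleGraph.Walk.cons hyz.symm SimpleGraph.Walk.nil) :=
      congrArg Subtype.val this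
    have := congrArg SimpleGraph.Walk.length h'
    simp at this
  -- distances
  have hdx : ∀ i, wdist T w (xs i) x = w (xs i) x := by
    intro i
    have : wdist T w (xs i) x =
        walkWeight w (SimpleGraph.Walk.cons (hxsadj i).symm SimpleGraph.Walk.nil) :=
      wdist_eq_path hT hw _ (by simp [SimpleGraph.Walk.isPath_def, (hxsadj i).ne'])
    simpa [walkWeight] using this
  have hdxy : wdist T w x y = w x y := by
    have : wdist T w x y =
        walkWeight w (SimpleGraph.Walk.cons hxy SimpleGraph.Walk.nil) :=
      wdist_eq_path hT hw _ (by simp [SimpleGraph.Walk.isPath_def, hxy.ne])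
    simpa [walkWeight] using this
  have hdy : ∀ j, wdist T w y (ys j) = w y (ys j) := by
    intro j
    have : wdist T w y (ys j) =
        walkWeight w (SimpleGraph.Walk.cons (hysadj j) SimpleGraph.Walk.nil) :=
      wdist_eq_path hT hw _ (by simp [SimpleGraph.Walk.isPath_def, (hysadj j).ne])
    simpa [walkWeight] using this
  have hkey : ∀ i j, wdist T w (xs i) (ys j)
      = wdist T w (xs i) x + wdist T w x y + wdist T w y (ys j) := by
    intro i j
    have hne : xs i ≠ ys j := by
      intro h
      exact htri (xs i) (hxsadj i) (h ▸ hysadj j)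
    have hQ : (SimpleGraph.Walk.cons (hxsadj i).symm (SimpleGraph.Walk.cons hxy
        (SimpleGraph.Walk.cons (hysadj j) SimpleGraph.Walk.nil)) :
        T.Walk (xs i) (ys j)).IsPath := by
      simp [SimpleGraph.Walk.isPath_def, (hxsadj i).ne', hxsne i, hne, hysne j,
        (hysne j).symm, hxy.ne, (hysadj j).ne]
    have := wdist_eq_path hT hw _ hQ
    rw [this, hdx, hdxy, hdy]
    simp only [walkWeight, add_zero]
    ring
  -- value of any admissible coupling
  have hval : ∀ γ : Fin p → Fin q → ℝ,
      (∀ i, ∑ j, γ i j = 1 / p) → (∀ j, ∑ i, γ i j = 1 / q) →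
      ∑ i, ∑ j, wdist T w (xs i) (ys j) * γ i j
        = (1 / p) * ∑ i, wdist T w (xs i) x + wdist T w x y
          + (1 / q) * ∑ j, wdist T w y (ys j) := by
    intro γ hrow hcol
    have expand : ∀ i j, wdist T w (xs i) (ys j) * γ i j
        = (wdist T w (xs i) x + wdist T w x y) * γ i j + wdist T w y (ys j) * γ i j := by
      intro i j; rw [hkey i j]; ring
    calc ∑ i, ∑ j, wdist T w (xs i) (ys j) * γ i j
        = (∑ i, ∑ j, (wdist T w (xs i) x + wdist T w x y) * γ i j)
          + ∑ i, ∑ j, wdist T w y (ys j) * γ i j := by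
          simp only [expand, Finset.sum_add_distrib]
      _ = ∑ i, ((wdist T w (xs i) x + wdist T w x y) * ∑ j, γ i j)
          + ∑ j, (wdist T w y (ys j) * ∑ i, γ i j) := by
          congr 1
          · exact Finset.sum_congr rfl fun i _ => (Finset.mul_sum _ _ _).symm
          · rw [Finset.sum_comm]
            exact Finset.sum_congr rfl fun j _ => (Finset.mul_sum _ _ _).symm
      _ = ∑ i, ((wdist T w (xs i) x + wdist T w x y) * (1/p))
          + ∑ j, (wdist T w y (ys j) * (1/q)) := by
          simp only [hrow, hcol]
      _ = (1 / p) * ∑ i, wdist T w (xs i) x + wdist T w x y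
          + (1 / q) * ∑ j, wdist T w y (ys j) := by
          simp only [add_mul, Finset.sum_add_distrib, Finset.sum_const, Finset.card_univ,
            Fintype.card_fin, nsmul_eq_mul, Finset.mul_sum]
          field_simp
          try ring
  constructor
  · refine ⟨fun _ _ => 1 / (p * q), fun i j => by positivity, ?_, ?_, ?_⟩
    · intro i; simp [Finset.sum_const]; field_simp; try ring
    · intro j; simp [Finset.sum_const]; field_simp; try ring
    · exact hval _ (fun i => by simp [Finset.sum_const]; field_simp; try ring)
        (fun j => by simp [Finset.sum_const]; field_simp; try ring)
  · rintro c ⟨γ, hpos, hrow, hcol, rfl⟩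
    exact (hval γ hrow hcol).ge
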